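/- Let N be a network with n inner vertices, and let F be a family of n+k edge sets of N such that the union of every k members of F contains (the edge set of) a directed s–t path. Then there exists an F-rainbow s–t path: an s–t path each of whose edges belongs to a distinct member of F. -/

import Mathlib

/-- A directed `s`–`t` path, recorded as its list of (distinct) vertices,
starting at `s` and ending at `t`. -/
def IsStPath {V : Type*} (s t : V) (p : List V) : Prop :=
  p.Nodup ∧ p.head? = some s ∧ p.getLast? = some t

/-- The (directed) edges of a path given by its vertex list. -/
def pathEdges {V : Type*} (p : List V) : List (V × V) := p.zip p.tail

/-- The inner vertices of a path: all vertices except the first and last. -/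
def innerVerts {V : Type*} (p : List V) : List V := p.tail.dropLast

/-- The family `F` of edge sets has a rainbow `s`–`t` path: an `s`–`t` path
whose edges are injectively represented by distinct members of `F`. -/
def HasRainbowStPath {V ι : Type*} (s t : V) (F : ι → Set (V × V)) : Prop :=
  ∃ p : List V, IsStPath s t p ∧
    ∃ g : Fin (pathEdges p).length → ι, Function.Injective g ∧
      ∀ j, (pathEdges p).get j ∈ F (g j)

/-- A regimentation of a family `F` of edge sets of the network `(V, s, t)`:
a set `paths` of internally disjoint `s`–`t` paths covering all vertices,
together with a map `I` from the essential subfamily `ess` onto `paths`, such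
that the edges of `I i` all belong to `F i`, and each path `p` has exactly
`|E(p)| - 1` essential sets assigned to it. -/
structure Regimentation {V ι : Type*} (s t : V) (F : ι → Set (V × V)) where
  paths : Set (List V)
  isPath : ∀ p ∈ paths, IsStPath s t p
  intDisj : ∀ p ∈ paths, ∀ q ∈ paths, p ≠ q →
    ∀ v ∈ innerVerts p, v ∉ innerVerts q
  cover : ∀ v : V, ∃ p ∈ paths, v ∈ p
  ess : Set ι
  I : ι → List V
  I_mem : ∀ i ∈ ess, I i ∈ paths
  I_surj : ∀ p ∈ paths, ∃ i ∈ ess, I i = p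
  I_rep : ∀ i ∈ ess, ∀ e ∈ pathEdges (I i), e ∈ F i
  I_count : ∀ p ∈ paths, {i | i ∈ ess ∧ I i = p}.ncard = (pathEdges p).length - 1

section Lemmas
variable {α β : Type*}

lemma pathEdges_cons_cons (x y : α) (l : List α) :
    pathEdges (x :: y :: l) = (x, y) :: pathEdges (y :: l) := rfl

lemma pathEdges_subset_cons (x : α) (l : List α) :
    pathEdges l ⊆ pathEdges (x :: l) := by
  cases l with
  | nil => simp [pathEdges]
  | cons y m => rw [pathEdges_cons_cons]; exact fun e he => List.mem_cons_of_mem _ he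

lemma pathEdges_subset_append (u v : List α) :
    pathEdges v ⊆ pathEdges (u ++ v) := by
  induction u with
  | nil => simp
  | cons x u ih => exact fun e he => (pathEdges_subset_cons x (u ++ v)) (ih he)

lemma pathEdges_map (f : α → β) (l : List α) :
    pathEdges (l.map f) = (pathEdges l).map (Prod.map f f) := by
  induction l with
  | nil => rfl
  | cons x l ih =>
    cases l with
    | nil => rfl
    | cons y m =>
      rw [List.map_cons, List.map_cons, pathEdges_cons_cons, ← List.map_cons (f := f) (a := y) (l := m), ih,
        pathEdges_cons_cons, List.map_cons]
      rfl

lemma getLast?_map' (f : α → β) (l : List α) :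
    (l.map f).getLast? = l.getLast?.map f := by
  induction l with
  | nil => rfl
  | cons x l ih =>
    cases l with
    | nil => rfl
    | cons y m =>
      rw [List.map_cons, List.map_cons, List.getLast?_cons_cons, ← List.map_cons (f := f) (a := y) (l := m), ih,
        List.getLast?_cons_cons]

lemma exists_path_of_walk : ∀ (N : ℕ) (w : List α), w.length ≤ N →
    ∃ p : List α, p.Nodup ∧ p.head? = w.head? ∧ p.getLast? = w.getLast? ∧
      (∀ x ∈ p, x ∈ w) ∧ ∀ e ∈ pathEdges p, e ∈ pathEdges w := by
  intro N
  induction N with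
  | zero =>
    intro w hw
    have hwnil : w = [] := List.length_eq_zero_iff.mp (Nat.le_zero.mp hw)
    subst hwnil
    exact ⟨[], by simp, rfl, rfl, by simp, by simp [pathEdges]⟩
  | succ N ih =>
    intro w hw
    cases w with
    | nil => exact ⟨[], by simp, rfl, rfl, by simp, by simp [pathEdges]⟩
    | cons a rest =>
      by_cases ha : a ∈ rest
      · obtain ⟨l2, l3, hr⟩ := List.append_of_mem ha
        subst hr
        have hlen : (a :: l3).length ≤ N := by
          simp only [List.length_cons, List.length_append] at hw ⊢
          omega
        obtain ⟨p, hnd, hh, hl, hm, he⟩ := ih (a :: l3) hlen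
        have hsplit : a :: (l2 ++ a :: l3) = (a :: l2) ++ (a :: l3) := by simp
        refine ⟨p, hnd, ?_, ?_, ?_, ?_⟩
        · rw [hh]; rfl
        · rw [hl, hsplit, List.getLast?_append_cons]
        · intro x hx
          have := hm x hx
          simp only [List.mem_cons, List.mem_append] at this ⊢
          tauto
        · intro e hee
          rw [hsplit]
          exact pathEdges_subset_append _ _ (he e hee)
      · obtain ⟨p, hnd, hh, hl, hm, he⟩ := ih rest (by simpa using hw)
        cases p with
        | nil =>
          have hrest : rest = [] := by
            cases rest with
            | nil => rfl
            | cons d m' => simp at hh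
          subst hrest
          exact ⟨[a], by simp, rfl, rfl, by simp, by simp⟩
        | cons c m =>
          obtain ⟨m', rfl⟩ : ∃ m', rest = c :: m' := by
            cases rest with
            | nil => simp at hh
            | cons d m' =>
              simp only [List.head?_cons, Option.some.injEq] at hh
              exact ⟨m', by rw [hh]⟩
          refine ⟨a :: c :: m, ?_, rfl, ?_, ?_, ?_⟩
          · exact List.nodup_cons.mpr ⟨fun hc => ha (hm a hc), hnd⟩
          · calc (a :: c :: m).getLast? = (c :: m).getLast? := List.getLast?_cons_cons
              _ = (c :: m').getLast? := hl
              _ = (a :: c :: m').getLast? := List.getLast?_cons_cons.symm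
          · intro x hx
            rcases List.mem_cons.mp hx with h | h
            · exact h ▸ List.mem_cons_self
            · exact List.mem_cons_of_mem _ (hm x h)
          · intro e hee
            rw [pathEdges_cons_cons] at hee ⊢
            rcases List.mem_cons.mp hee with h | h
            · exact h ▸ List.mem_cons_self
            · exact List.mem_cons_of_mem _ (he e h)

lemma stPath_decomp {s t : α} {p : List α} (hp : IsStPath s t p) (hst : s ≠ t) :
    ∃ b l, p = s :: b :: l := by
  obtain ⟨hnd, hh, hl⟩ := hp
  cases p with
  | nil => simp at hh
  | cons x q =>
    simp only [List.head?_cons, Option.some.injEq] at hh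
    subst hh
    cases q with
    | nil => simp at hl; exact absurd hl hst
    | cons b l => exact ⟨b, l, rfl⟩

end Lemmas

section Main

variable {V : Type*} {I : Type*}

lemma rainbow_prologue [Fintype I] {k : ℕ} (s t : V) (hst : s ≠ t)
    (hcard : k ≤ Fintype.card I) (F : I → Set (V × V))
    (hk : ∀ K : Finset I, K.card = k →
      ∃ p : List V, IsStPath s t p ∧ ∀ e ∈ pathEdges p, e ∈ ⋃ i ∈ K, F i) :
    ∃ j b, (s, b) ∈ F j ∧ b ≠ s := by
  obtain ⟨K, -, hK⟩ := Finset.exists_subset_card_eq (s := (Finset.univ : Finset I)) (n := k)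
    (by rw [Finset.card_univ]; exact hcard)
  obtain ⟨p, hp, hmem⟩ := hk K hK
  obtain ⟨b, l, rfl⟩ := stPath_decomp hp hst
  have hedge : (s, b) ∈ pathEdges (s :: b :: l) := by
    rw [pathEdges_cons_cons]; exact List.mem_cons_self
  have hmem2 := hmem _ hedge
  simp only [Set.mem_iUnion] at hmem2
  obtain ⟨j, _, hj⟩ := hmem2
  have hbs : b ≠ s := by
    intro h
    subst h
    exact (List.nodup_cons.mp hp.1).1 (List.mem_cons_self)
  exact ⟨j, b, hj, hbs⟩

end Main

universe u v

theorem rainbow_aux : ∀ (n : ℕ) {V : Type u} {I : Type v} [Fintype V] [Fintype I] (k : ℕ)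
    (s t : V), s ≠ t → Fintype.card V = n + 2 → Fintype.card I = n + k →
    ∀ (F : I → Set (V × V)),
    (∀ K : Finset I, K.card = k →
      ∃ p : List V, IsStPath s t p ∧ ∀ e ∈ pathEdges p, e ∈ ⋃ i ∈ K, F i) →
    ∃ p : List V, IsStPath s t p ∧ ∃ is : List I, is.Nodup ∧
      List.Forall₂ (fun e i => e ∈ F i) (pathEdges p) is := by
  intro n
  induction n with
  | zero =>
    intro V I _ _ k s t hst hV hI F hk
    classical
    obtain ⟨j, b, hj, hbs⟩ := rainbow_prologue s t hst (by omega) F hk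
    by_cases hbt : b = t
    · subst hbt
      refine ⟨[s, b], ⟨by simp [Ne.symm hbs], rfl, by simp⟩, [j], List.nodup_singleton j, ?_⟩
      exact List.Forall₂.cons hj List.Forall₂.nil
    · exfalso
      have h3 : ({s, b, t} : Finset V).card = 3 := by
        rw [Finset.card_insert_of_notMem (by simp [Ne.symm hbs, hst]),
          Finset.card_insert_of_notMem (by simp [hbt]), Finset.card_singleton]
      have hle := Finset.card_le_univ ({s, b, t} : Finset V)
      rw [hV] at hle
      omega
  | succ n ih =>
    intro V I _ _ k s t hst hV hI F hk
    classical
    obtain ⟨j, v, hj, hvs⟩ := rainbow_prologue s t hst (by omega) F hk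
    by_cases hvt : v = t
    · subst hvt
      refine ⟨[s, v], ⟨by simp [Ne.symm hvs], rfl, by simp⟩, [j], List.nodup_singleton j, ?_⟩
      exact List.Forall₂.cons hj List.Forall₂.nil
    · -- contraction of v into s
      have hsv : s ≠ v := Ne.symm hvs
      have htv : t ≠ v := fun h => hvt h.symm
      let s' : {x : V // x ≠ v} := ⟨s, hsv⟩
      let t' : {x : V // x ≠ v} := ⟨t, htv⟩
      let π : V → {x : V // x ≠ v} := fun a => if h : a = v then s' else ⟨a, h⟩
      have hπs : π s = s' := by simp [π, hsv]; rfl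
      have hπt : π t = t' := by simp [π, htv]; rfl
      have hπ_ne : ∀ (a : V) (x : {x : V // x ≠ v}), π a = x → x ≠ s' → a = x.val := by
        intro a x hpa hx
        by_cases h : a = v
        · exact absurd (by rw [← hpa]; simp [π, h]) hx
        · rw [← hpa]; simp [π, h]
      have hπ_pre_s : ∀ a : V, π a = s' → a = s ∨ a = v := by
        intro a hpa
        by_cases h : a = v
        · exact Or.inr h
        · refine Or.inl ?_
          have : (⟨a, h⟩ : {x : V // x ≠ v}) = s' := by rw [← hpa]; simp [π, h]
          exact congrArg Subtype.val this
      have hst' : s' ≠ t' := fun h => hst (congrArg Subtype.val h)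
      have hV' : Fintype.card {x : V // x ≠ v} = n + 2 := by
        have h1 : Fintype.card {x : V // x = v} = 1 := Fintype.card_subtype_eq v
        have h2 := Fintype.card_subtype_compl (fun x : V => x = v)
        rw [h1, hV] at h2
        rw [h2]
        omega
      have hI' : Fintype.card {i : I // i ≠ j} = n + k := by
        have h1 : Fintype.card {i : I // i = j} = 1 := Fintype.card_subtype_eq j
        have h2 := Fintype.card_subtype_compl (fun i : I => i = j)
        rw [h1, hI] at h2
        rw [h2]
        omega
      set F' : {i : I // i ≠ j} → Set ({x : V // x ≠ v} × {x : V // x ≠ v}) :=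
        fun m => (fun e : V × V => (π e.1, π e.2)) '' F m.val with hF'def
      have hk' : ∀ K' : Finset {i : I // i ≠ j}, K'.card = k →
          ∃ p : List {x : V // x ≠ v}, IsStPath s' t' p ∧
            ∀ e ∈ pathEdges p, e ∈ ⋃ m ∈ K', F' m := by
        intro K' hK'
        obtain ⟨p, hp, hmem⟩ := hk (K'.map ⟨Subtype.val, Subtype.val_injective⟩)
          (by rw [Finset.card_map]; exact hK')
        obtain ⟨q, hqnd, hqh, hql, -, hqe⟩ := exists_path_of_walk (p.map π).length (p.map π) le_rfl
        refine ⟨q, ⟨hqnd, ?_, ?_⟩, ?_⟩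
        · rw [hqh, List.head?_map, hp.2.1, Option.map_some, hπs]
        · rw [hql, getLast?_map', hp.2.2, Option.map_some, hπt]
        · intro e he
          have h2 := hqe e he
          rw [pathEdges_map] at h2
          obtain ⟨e₀, he₀, rfl⟩ := List.mem_map.mp h2
          have h3 := hmem e₀ he₀
          simp only [Set.mem_iUnion, Finset.mem_map, Function.Embedding.coeFn_mk] at h3 ⊢
          obtain ⟨i, ⟨m, hmK, rfl⟩, hi⟩ := h3
          exact ⟨m, hmK, e₀, hi, rfl⟩
      obtain ⟨q, hqpath, is', hnd', hF2'⟩ := ih k s' t' hst' hV' hI' F' hk'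
      obtain ⟨w, rest, rfl⟩ := stPath_decomp hqpath hst'
      have hs'_notmem : s' ∉ w :: rest := (List.nodup_cons.mp hqpath.1).1
      have hwr_nd : (w :: rest).Nodup := (List.nodup_cons.mp hqpath.1).2
      have hwr_last : (w :: rest).getLast? = some t' := by
        rw [← List.getLast?_cons_cons (a := s')]
        exact hqpath.2.2
      rw [pathEdges_cons_cons] at hF2'
      obtain ⟨i0, is0, h1, h2, rfl⟩ := List.forall₂_cons_left_iff.mp hF2'
      -- head edge witness
      obtain ⟨e₀, he₀F, heq⟩ := h1
      have heq1 : π e₀.1 = s' := congrArg Prod.fst heq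
      have heq2 : π e₀.2 = w := congrArg Prod.snd heq
      have hw_ne : w ≠ s' := by
        intro h
        exact hs'_notmem (h ▸ List.mem_cons_self)
      have he₀2 : e₀.2 = w.val := hπ_ne _ _ heq2 hw_ne
      -- lifting the tail
      have lift : ∀ (u : List {x : V // x ≠ v}) (iss : List {i : I // i ≠ j}),
          (∀ x ∈ u, x ≠ s') →
          List.Forall₂ (fun e m => e ∈ F' m) (pathEdges u) iss →
          List.Forall₂ (fun (e : V × V) (i : I) => e ∈ F i) (pathEdges (u.map Subtype.val))
            (iss.map Subtype.val) := by
        intro u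
        induction u with
        | nil =>
          intro iss _ h
          cases h
          exact List.Forall₂.nil
        | cons x u ihu =>
          cases u with
          | nil =>
            intro iss _ h
            cases h
            exact List.Forall₂.nil
          | cons y m =>
            intro iss hne h
            rw [pathEdges_cons_cons] at h
            obtain ⟨i1, iss1, hh1, hh2, rfl⟩ := List.forall₂_cons_left_iff.mp h
            rw [List.map_cons, List.map_cons, pathEdges_cons_cons, List.map_cons]
            refine List.Forall₂.cons ?_ (by
              have := ihu iss1 (fun z hz => hne z (List.mem_cons_of_mem _ hz)) hh2
              rw [List.map_cons] at this
              exact this)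
            obtain ⟨e₁, he₁F, heq₁⟩ := hh1
            have hx : x ≠ s' := hne x (List.mem_cons_self)
            have hy : y ≠ s' := hne y (List.mem_cons_of_mem _ (List.mem_cons_self))
            have h1' : e₁.1 = x.val := hπ_ne _ _ (congrArg Prod.fst heq₁) hx
            have h2' : e₁.2 = y.val := hπ_ne _ _ (congrArg Prod.snd heq₁) hy
            have : e₁ = (x.val, y.val) := Prod.ext h1' h2'
            exact this ▸ he₁F
      have hlift := lift (w :: rest) is0
        (fun z hz h => hs'_notmem (h ▸ hz)) h2
      rw [List.map_cons] at hlift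
      -- facts about rlist := w.val :: rest.map val
      have hrl_ne_s : ∀ x ∈ w.val :: rest.map Subtype.val, x ≠ s := by
        intro x hx hxs
        have hex : ∃ y ∈ w :: rest, y.val = x := by
          rcases List.mem_cons.mp hx with h | h
          · exact ⟨w, List.mem_cons_self, h.symm⟩
          · obtain ⟨y, hy, hy2⟩ := List.mem_map.mp h
            exact ⟨y, List.mem_cons_of_mem _ hy, hy2⟩
        obtain ⟨y, hy, hy2⟩ := hex
        exact hs'_notmem
          (by rwa [show y = s' from Subtype.ext (by rw [hy2, hxs])] at hy)
      have hrl_ne_v : ∀ x ∈ w.val :: rest.map Subtype.val, x ≠ v := by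
        intro x hx
        have : ∃ y ∈ w :: rest, y.val = x := by
          rcases List.mem_cons.mp hx with h | h
          · exact ⟨w, List.mem_cons_self, h.symm⟩
          · obtain ⟨y, hy, hy2⟩ := List.mem_map.mp h
            exact ⟨y, List.mem_cons_of_mem _ hy, hy2⟩
        obtain ⟨y, hy, hy2⟩ := this
        exact hy2 ▸ y.2
      have hrl_nd : (w.val :: rest.map Subtype.val).Nodup := by
        rw [← List.map_cons]
        exact hwr_nd.map Subtype.val_injective
      have hrl_last : (w.val :: rest.map Subtype.val).getLast? = some t := by
        rw [← List.map_cons, getLast?_map', hwr_last]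
        rfl
      have his0_nd : (is0.map Subtype.val).Nodup :=
        (List.nodup_cons.mp hnd').2.map Subtype.val_injective
      have hi0_notmem : i0.val ∉ is0.map Subtype.val := by
        intro h
        obtain ⟨y, hy, hy2⟩ := List.mem_map.mp h
        exact (List.nodup_cons.mp hnd').1 (by rwa [show y = i0 from Subtype.ext hy2] at hy)
      rcases hπ_pre_s _ heq1 with h1s | h1v
      · -- first edge already leaves s
        have he₀eq : e₀ = (s, w.val) := Prod.ext h1s he₀2
        refine ⟨s :: w.val :: rest.map Subtype.val, ⟨?_, rfl, ?_⟩,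
          i0.val :: is0.map Subtype.val, ?_, ?_⟩
        · exact List.nodup_cons.mpr ⟨fun h => hrl_ne_s s h rfl, hrl_nd⟩
        · rw [List.getLast?_cons_cons]; exact hrl_last
        · exact List.nodup_cons.mpr ⟨hi0_notmem, his0_nd⟩
        · rw [pathEdges_cons_cons]
          exact List.Forall₂.cons (he₀eq ▸ he₀F) hlift
      · -- first edge of q comes from v: prepend (s, v)
        have he₀eq : e₀ = (v, w.val) := Prod.ext h1v he₀2
        refine ⟨s :: v :: w.val :: rest.map Subtype.val, ⟨?_, rfl, ?_⟩,
          j :: i0.val :: is0.map Subtype.val, ?_, ?_⟩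
        · refine List.nodup_cons.mpr ⟨?_, List.nodup_cons.mpr
            ⟨fun h => hrl_ne_v v h rfl, hrl_nd⟩⟩
          intro h
          rcases List.mem_cons.mp h with h' | h'
          · exact hsv h'
          · exact hrl_ne_s s h' rfl
        · rw [List.getLast?_cons_cons, List.getLast?_cons_cons]; exact hrl_last
        · refine List.nodup_cons.mpr ⟨?_, List.nodup_cons.mpr ⟨hi0_notmem, his0_nd⟩⟩
          intro h
          rcases List.mem_cons.mp h with h' | h'
          · exact i0.2 h'.symm
          · obtain ⟨y, _, hy2⟩ := List.mem_map.mp h'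
            exact y.2 hy2
        · rw [pathEdges_cons_cons, pathEdges_cons_cons]
          exact List.Forall₂.cons hj (List.Forall₂.cons (he₀eq ▸ he₀F) hlift)


/-- If a network has `n` inner vertices and `F` is a family of `n + k` edge
sets, the union of every `k` of which contains an `s`–`t` path, then there is
an `F`-rainbow `s`–`t` path. -/
theorem stmt_13 {V : Type*} [Fintype V] (s t : V) (hst : s ≠ t) (n k : ℕ)
    (hV : Fintype.card V = n + 2) (F : Fin (n + k) → Set (V × V))
    (hN : ∀ i, ∀ e ∈ F i, e.2 ≠ s ∧ e.1 ≠ t)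
    (hk : ∀ K : Finset (Fin (n + k)), K.card = k →
      ∃ p : List V, IsStPath s t p ∧ ∀ e ∈ pathEdges p, e ∈ ⋃ i ∈ K, F i) :
    HasRainbowStPath s t F := by
  obtain ⟨p, hp, is, hnd, hF2⟩ :=
    rainbow_aux n k s t hst hV (Fintype.card_fin _) F hk
  refine ⟨p, hp, fun m => is.get (Fin.cast hF2.length_eq m), ?_, ?_⟩
  · exact Function.Injective.comp (List.nodup_iff_injective_get.mp hnd)
      (Fin.cast_injective _)
  · intro m
    exact (List.forall₂_iff_get.mp hF2).2 m.val m.isLt (hF2.length_eq ▸ m.isLt)
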